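/- Let k be a commutative ring, X a set, and W a set of nonidentity elements of the free monoid on X such that: (a) for distinct w, w' in W there are no words u, u' with w' = u * w * u' (no member of W is a subword of another), and (b) for all w, w' in W and every factorization w = a * b with a and b both nonidentity, there is no word c with w' = b * c (no nonempty proper final subword of a member of W is an initial subword of a member of W). Let A be the k-subalgebra of the free associative k-algebra k⟨X⟩ generated by (the monomials corresponding to) W. Then A has the ideal extension property in k⟨X⟩: every two-sided ideal I of A equals the intersection of A with the two-sided ideal of k⟨X⟩ generated by I. -/

import Mathlib

/-- The two-sided ideal of a (possibly noncommutative, possibly nonunital) ring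
generated by a set: the smallest two-sided ideal containing the set. -/
def TwoSidedIdeal.span' {R : Type*} [NonUnitalNonAssocRing R] (s : Set R) :
    TwoSidedIdeal R :=
  sInf {I : TwoSidedIdeal R | s ⊆ I}


namespace IEP

open FreeMonoid

variable {X : Type*}

theorem fm_mul_eq_mul_iff {a b c d : FreeMonoid X} :
    a * b = c * d ↔ (∃ a', c = a * a' ∧ b = a' * d) ∨ ∃ c', a = c * c' ∧ d = c' * b := by
  constructor
  · intro h
    have h' : a.toList ++ b.toList = c.toList ++ d.toList := by
      rw [← FreeMonoid.toList_mul, ← FreeMonoid.toList_mul, h]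
    rcases List.append_eq_append_iff.1 h' with ⟨a', h1, h2⟩ | ⟨c', h1, h2⟩
    · refine Or.inl ⟨FreeMonoid.ofList a', ?_, ?_⟩
      · apply FreeMonoid.toList.injective; simpa using h1
      · apply FreeMonoid.toList.injective; simpa using h2
    · refine Or.inr ⟨FreeMonoid.ofList c', ?_, ?_⟩
      · apply FreeMonoid.toList.injective; simpa using h1
      · apply FreeMonoid.toList.injective; simpa using h2
  · rintro (⟨a', rfl, rfl⟩ | ⟨c', rfl, rfl⟩) <;> rw [mul_assoc]

theorem fm_mul_eq_one {a b : FreeMonoid X} (h : a * b = 1) : a = 1 ∧ b = 1 := by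
  have := congrArg FreeMonoid.toList h
  rw [FreeMonoid.toList_mul] at this
  rcases List.append_eq_nil_iff.1 this with ⟨h1, h2⟩
  exact ⟨FreeMonoid.toList.injective h1, FreeMonoid.toList.injective h2⟩

theorem fm_eq_one_of_left {a b : FreeMonoid X} (h : a * b = b) : a = 1 := by
  have : (a * b).length = b.length := by rw [h]
  rw [FreeMonoid.length_mul] at this
  have : a.length = 0 := by omega
  exact FreeMonoid.length_eq_zero.1 this

variable (W : Set (FreeMonoid X))

/-- The submonoid generated by the words `W`. -/
abbrev Mo : Submonoid (FreeMonoid X) := Submonoid.closure W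

section U1
variable (hW1 : ∀ w ∈ W, w ≠ 1)
  (ha : ∀ w ∈ W, ∀ w' ∈ W, w ≠ w' → ¬ ∃ u u' : FreeMonoid X, w' = u * w * u')

include hW1 ha in
theorem U1_list : ∀ L : List (FreeMonoid X), (∀ b ∈ L, b ∈ W) →
    ∀ h w, w ∈ W → L.prod = h * w → h ∈ Mo W := by
  intro L
  induction L with
  | nil =>
    intro _ h w hw hp
    rw [List.prod_nil] at hp
    exact absurd (fm_mul_eq_one hp.symm).2 (hW1 w hw)
  | cons w1 L' IH =>
    intro hmem h w hw hp
    rw [List.prod_cons] at hp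
    have hw1 : w1 ∈ W := hmem w1 (by simp)
    have hmem' : ∀ b ∈ L', b ∈ W := fun b hb => hmem b (by simp [hb])
    rcases fm_mul_eq_mul_iff.1 hp with ⟨a', rfl, hb⟩ | ⟨c', h1, h2⟩
    · -- h = w1 * a',  L'.prod = a' * w
      exact mul_mem (Submonoid.subset_closure hw1) (IH hmem' a' w hw hb)
    · -- w1 = h * c',  w = c' * L'.prod
      by_cases hh : h = 1
      · rw [hh]; exact one_mem _
      by_cases hm' : L'.prod = 1
      · rw [hm', mul_one] at h2
        subst h2
        by_cases hww1 : w = w1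
        · subst hww1
          exact absurd (fm_eq_one_of_left h1.symm) hh
        · exact absurd ⟨h, 1, by rw [mul_one, h1]⟩ (ha w hw w1 hw1 hww1)
      · -- L' nonempty; take its first block
        have hL' : L' ≠ [] := by intro hn; rw [hn, List.prod_nil] at hm'; exact hm' rfl
        obtain ⟨w2, L'', rfl⟩ := List.exists_cons_of_ne_nil hL'
        have hw2 : w2 ∈ W := hmem' w2 (by simp)
        rw [List.prod_cons] at h2
        by_cases hw2w : w2 = w
        · subst hw2w
          -- w = c' * w2 * L''.prod forces c' = 1, L''.prod = 1
          have hlen := congrArg FreeMonoid.length h2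
          rw [FreeMonoid.length_mul, FreeMonoid.length_mul] at hlen
          have hc' : c'.length = 0 := by omega
          rw [FreeMonoid.length_eq_zero.1 hc', mul_one] at h1
          exact Submonoid.subset_closure (h1 ▸ hw1)
        · exact absurd ⟨c', L''.prod, by rw [mul_assoc]; exact h2⟩ (ha w2 hw2 w hw hw2w)

include hW1 ha in
theorem U1 {m : FreeMonoid X} (hm : m ∈ Mo W) {h w : FreeMonoid X} (hw : w ∈ W)
    (heq : m = h * w) : h ∈ Mo W := by
  obtain ⟨L, hL, hLp⟩ := Submonoid.exists_list_of_mem_closure hm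
  exact U1_list W hW1 ha L hL h w hw (by rw [hLp, ← heq])

end U1

section absorb

open scoped Classical

/-- length of the longest suffix of `g` lying in the submonoid generated by `W`. -/
noncomputable def nsuf (g : FreeMonoid X) : ℕ :=
  Nat.findGreatest
    (fun n => FreeMonoid.ofList ((FreeMonoid.toList g).drop (g.length - n)) ∈ Mo W) g.length

/-- the longest suffix of `g` lying in `Mo W`. -/
noncomputable def suf (g : FreeMonoid X) : FreeMonoid X :=
  FreeMonoid.ofList ((FreeMonoid.toList g).drop (g.length - nsuf W g))

/-- the prefix complementary to `suf`. -/
noncomputable def pre (g : FreeMonoid X) : FreeMonoid X :=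
  FreeMonoid.ofList ((FreeMonoid.toList g).take (g.length - nsuf W g))

theorem pre_mul_suf (g : FreeMonoid X) : pre W g * suf W g = g := by
  apply FreeMonoid.toList.injective
  rw [FreeMonoid.toList_mul]
  simp [pre, suf]

theorem nsuf_le (g : FreeMonoid X) : nsuf W g ≤ g.length := Nat.findGreatest_le _

theorem toList_length (g : FreeMonoid X) : (FreeMonoid.toList g).length = g.length := rfl

theorem suf_mem (g : FreeMonoid X) : suf W g ∈ Mo W := by
  have h0 : FreeMonoid.ofList ((FreeMonoid.toList g).drop (g.length - 0)) ∈ Mo W := by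
    have : (FreeMonoid.toList g).drop (g.length - 0) = [] := by
      apply List.drop_eq_nil_of_le
      rw [toList_length]; omega
    rw [this]; exact one_mem _
  unfold suf nsuf
  exact Nat.findGreatest_spec
    (P := fun n => FreeMonoid.ofList ((FreeMonoid.toList g).drop (g.length - n)) ∈ Mo W)
    (Nat.zero_le _) h0

theorem suf_length (g : FreeMonoid X) : (suf W g).length = nsuf W g := by
  have h := nsuf_le W g
  show (FreeMonoid.ofList ((FreeMonoid.toList g).drop (g.length - nsuf W g))).length = _
  have : ∀ l : List X, (FreeMonoid.ofList l).length = l.length := fun _ => rfl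
  rw [this, List.length_drop, toList_length]
  omega

theorem nsuf_spec_le {g s p : FreeMonoid X} (hgs : g = p * s) (hs : s ∈ Mo W) :
    s.length ≤ nsuf W g := by
  unfold nsuf
  apply Nat.le_findGreatest
  · rw [hgs, FreeMonoid.length_mul]; omega
  · have hd : (FreeMonoid.toList g).drop (g.length - s.length) = FreeMonoid.toList s := by
      rw [hgs, FreeMonoid.toList_mul]
      have h1 : (p * s).length = p.length + s.length := FreeMonoid.length_mul _ _
      rw [h1]
      have h2 : p.length + s.length - s.length = p.length := by omega
      rw [h2, ← toList_length p]
      exact List.drop_left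
    rw [hd, FreeMonoid.ofList_toList]
    exact hs

/-- A suffix of a given length is unique. -/
theorem suffix_eq_of_length {p s p' s' : FreeMonoid X} (h : p * s = p' * s')
    (hl : s.length = s'.length) : p = p' ∧ s = s' := by
  rcases fm_mul_eq_mul_iff.1 h with ⟨a', rfl, rfl⟩ | ⟨c', rfl, rfl⟩
  · rw [FreeMonoid.length_mul] at hl
    have : a'.length = 0 := by omega
    rw [FreeMonoid.length_eq_zero.1 this]
    simp
  · rw [FreeMonoid.length_mul] at hl
    have : c'.length = 0 := by omega
    rw [FreeMonoid.length_eq_zero.1 this]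
    simp

/-- The label left over after absorbing the longest `M`-suffix has no nonempty
`M`-suffix. -/
theorem RR_pre (g : FreeMonoid X) :
    ∀ s p, pre W g = p * s → s ∈ Mo W → s = 1 := by
  intro s p hps hs
  by_contra hs1
  have h2 : p * (s * suf W g) = g := by rw [← mul_assoc, ← hps, pre_mul_suf]
  have hle := nsuf_spec_le W h2.symm (mul_mem hs (suf_mem W g))
  rw [FreeMonoid.length_mul, suf_length] at hle
  have : s.length = 0 := by omega
  exact hs1 (FreeMonoid.length_eq_zero.1 this)

end absorb

section ABS

variable (hW1 : ∀ w ∈ W, w ≠ 1)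
  (ha : ∀ w ∈ W, ∀ w' ∈ W, w ≠ w' → ¬ ∃ u u' : FreeMonoid X, w' = u * w * u')
  (hb : ∀ w ∈ W, ∀ w' ∈ W, ∀ a b : FreeMonoid X, w = a * b → a ≠ 1 → b ≠ 1 →
      ¬ ∃ c : FreeMonoid X, w' = b * c)

include hW1 ha in
/-- Appending a full word of `W` to a reduced label gets absorbed exactly. -/
theorem ABS1 {t w : FreeMonoid X} (hrr : ∀ s p, t = p * s → s ∈ Mo W → s = 1)
    (hw : w ∈ W) : pre W (t * w) = t ∧ suf W (t * w) = w := by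
  have hge : w.length ≤ nsuf W (t * w) :=
    nsuf_spec_le W rfl (Submonoid.subset_closure hw)
  have hle : nsuf W (t * w) ≤ w.length := by
    by_contra hlt
    push_neg at hlt
    have hq := pre_mul_suf W (t * w)
    have hqlen := suf_length W (t * w)
    rcases fm_mul_eq_mul_iff.1 hq with ⟨a', ht, hq'⟩ | ⟨c', _, hw'⟩
    · have ha' : a' ∈ Mo W := U1 W hW1 ha (suf_mem W (t * w)) hw hq'
      have : a' = 1 := hrr a' (pre W (t * w)) ht ha'
      rw [this, one_mul] at hq'
      rw [hq'] at hqlen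
      omega
    · have hlen := congrArg FreeMonoid.length hw'
      rw [FreeMonoid.length_mul, hqlen] at hlen
      omega
  have hn : nsuf W (t * w) = w.length := le_antisymm hle hge
  have := suffix_eq_of_length (p := pre W (t * w)) (s := suf W (t * w))
    (pre_mul_suf W (t * w)) (by rw [suf_length, hn])
  exact this

include hW1 ha hb in
/-- Appending a proper nonempty prefix of a word of `W` to a reduced label
absorbs nothing. -/
theorem ABS0 {t w p c : FreeMonoid X} (hrr : ∀ s p, t = p * s → s ∈ Mo W → s = 1)
    (hw : w ∈ W) (hsplit : w = p * c) (hc : c ≠ 1) :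
    pre W (t * p) = t * p ∧ suf W (t * p) = 1 := by
  have hn : nsuf W (t * p) = 0 := by
    by_contra hn0
    have hq := pre_mul_suf W (t * p)
    have hqlen := suf_length W (t * p)
    have hq1 : suf W (t * p) ≠ 1 := by
      intro h1
      rw [h1, FreeMonoid.length_one] at hqlen
      exact hn0 hqlen.symm
    by_cases hp1 : p = 1
    · have h' : t = pre W (t * p) * suf W (t * p) := by
        rw [hq, hp1, mul_one]
      exact hq1 (hrr _ _ h' (suf_mem W (t * p)))
    obtain ⟨L, hL, hLp⟩ := Submonoid.exists_list_of_mem_closure (suf_mem W (t * p))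
    rcases List.eq_nil_or_concat L with rfl | ⟨L₁, w'', rfl⟩
    · exact hq1 (by rw [← hLp, List.prod_nil])
    have hw'' : w'' ∈ W := hL w'' (by simp)
    have hq₁ : L₁.prod ∈ Mo W := by
      apply Submonoid.list_prod_mem
      intro b hbmem
      exact Submonoid.subset_closure (hL b (by simp [hbmem]))
    have heq : (pre W (t * p) * L₁.prod) * w'' = t * p := by
      rw [mul_assoc, ← List.prod_concat, hLp]
      exact pre_mul_suf W (t * p)
    have hclen : 1 ≤ c.length := by
      rcases Nat.eq_zero_or_pos c.length with h0 | h1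
      · exact absurd (FreeMonoid.length_eq_zero.1 h0) hc
      · exact h1
    rcases fm_mul_eq_mul_iff.1 heq with ⟨a', ht, hw''eq⟩ | ⟨c', _, hpeq⟩
    · by_cases ha1 : a' = 1
      · rw [ha1, one_mul] at hw''eq
        have hne : w'' ≠ w := by
          intro h
          have := congrArg FreeMonoid.length hsplit
          rw [← h, hw''eq, FreeMonoid.length_mul] at this
          omega
        exact ha w'' hw'' w hw hne ⟨1, c, by rw [one_mul, hw''eq]; exact hsplit⟩
      · exact hb w'' hw'' w hw a' p hw''eq ha1 hp1 ⟨c, hsplit⟩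
    · have hne : w'' ≠ w := by
        intro h
        have := congrArg FreeMonoid.length hsplit
        rw [hpeq, FreeMonoid.length_mul, FreeMonoid.length_mul, ← h] at this
        omega
      exact ha w'' hw'' w hw hne ⟨c', c, by rw [hsplit, hpeq]⟩
  constructor
  · have := pre_mul_suf W (t * p)
    have hs1 : suf W (t * p) = 1 := by
      have := suf_length W (t * p)
      rw [hn] at this
      exact FreeMonoid.length_eq_zero.1 this
    rw [hs1, mul_one] at this
    exact this
  · have := suf_length W (t * p)
    rw [hn] at this
    exact FreeMonoid.length_eq_zero.1 this

end ABS

end IEP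

namespace IEP

section AlgebraPart

set_option synthInstance.maxHeartbeats 1000000
set_option maxHeartbeats 2000000

variable {k : Type*} [CommRing k] {X : Type*} {W : Set (FreeMonoid X)}

/-- The subalgebra generated by the monomials of `W`. -/
noncomputable abbrev AA (k : Type*) [CommRing k] (X : Type*) (W : Set (FreeMonoid X)) :
    Subalgebra k (MonoidAlgebra k (FreeMonoid X)) :=
  Algebra.adjoin k (MonoidAlgebra.of k (FreeMonoid X) '' W)

theorem of_mem_A {m : FreeMonoid X} (hm : m ∈ Mo W) :
    MonoidAlgebra.of k (FreeMonoid X) m ∈ AA k X W := by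
  induction hm using Submonoid.closure_induction with
  | mem w hw => exact Algebra.subset_adjoin ⟨w, hw, rfl⟩
  | one => rw [map_one]; exact one_mem _
  | mul x y _ _ hx hy => rw [map_mul]; exact mul_mem hx hy

variable (I : TwoSidedIdeal (AA k X W))

noncomputable local instance quotAlgebra : Algebra k I.ringCon.Quotient where
  algebraMap := (RingCon.mk' I.ringCon).comp (algebraMap k (AA k X W))
  commutes' := by
    intro c x
    induction x using Quotient.ind with
    | _ y =>
      have := congrArg (RingCon.mk' I.ringCon) (Algebra.commutes c y)
      rw [map_mul, map_mul] at this
      exact this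
  smul_def' := by
    intro c x
    induction x using Quotient.ind with
    | _ y =>
      show c • (y : I.ringCon.Quotient) = _
      rw [← RingCon.coe_smul]
      have := congrArg (RingCon.mk' I.ringCon) (Algebra.smul_def c y)
      rw [map_mul] at this
      exact this

open scoped Classical in
/-- coefficient map sending a monomial in `Mo W` to the quotient ring. -/
noncomputable def chi (g : FreeMonoid X) : I.ringCon.Quotient :=
  if h : MonoidAlgebra.of k (FreeMonoid X) g ∈ AA k X W then RingCon.mk' I.ringCon ⟨_, h⟩ else 0

theorem chi_mem {m : FreeMonoid X} (hm : m ∈ Mo W) :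
    chi I m = RingCon.mk' I.ringCon ⟨MonoidAlgebra.of k (FreeMonoid X) m, of_mem_A hm⟩ := by
  rw [chi, dif_pos (of_mem_A hm)]

theorem chi_one : chi I 1 = 1 := by
  rw [chi_mem I (one_mem _)]
  have : (⟨MonoidAlgebra.of k (FreeMonoid X) 1, of_mem_A (one_mem _)⟩ : AA k X W) = 1 :=
    Subtype.ext (map_one _)
  rw [this, map_one]

theorem chi_mul {m m' : FreeMonoid X} (hm : m ∈ Mo W) (hm' : m' ∈ Mo W) :
    chi I (m * m') = chi I m * chi I m' := by
  rw [chi_mem I hm, chi_mem I hm', chi_mem I (mul_mem hm hm'), ← map_mul]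
  congr 1
  exact Subtype.ext (map_mul (MonoidAlgebra.of k (FreeMonoid X)) m m')

/-- The module on which the monoid algebra acts: finitely supported functions from
labels (words) to the quotient ring. -/
noncomputable abbrev Vv := FreeMonoid X →₀ I.ringCon.Quotient

/-- The action of a single letter: append it to the label and absorb the longest
`Mo W`-suffix into the coefficient. -/
noncomputable def stepL (x : X) : Vv I →ₗ[k] Vv I :=
  Finsupp.lsum k fun t =>
    { toFun := fun r =>
        Finsupp.single (pre W (t * FreeMonoid.of x)) (r * chi I (suf W (t * FreeMonoid.of x)))
      map_add' := fun r1 r2 => by rw [add_mul, Finsupp.single_add]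
      map_smul' := fun c r => by
        rw [RingHom.id_apply, smul_mul_assoc, Finsupp.smul_single] }

/-- The representation of the monoid algebra on `Vv` (as a right action, so we use the
multiplicative opposite of the endomorphism algebra). -/
noncomputable def rho :
    MonoidAlgebra k (FreeMonoid X) →ₐ[k] (Module.End k (Vv I))ᵐᵒᵖ :=
  MonoidAlgebra.lift k _ (FreeMonoid X) (FreeMonoid.lift fun x => MulOpposite.op (stepL I x))

/-- The (right) action of an element of the monoid algebra on `Vv`. -/
noncomputable def act (b : MonoidAlgebra k (FreeMonoid X)) : Vv I →ₗ[k] Vv I :=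
  (rho I b).unop

theorem act_one (v : Vv I) : act I 1 v = v := by
  show ((rho I 1).unop) v = v
  rw [map_one]
  rfl

theorem act_mul (b c : MonoidAlgebra k (FreeMonoid X)) (v : Vv I) :
    act I (b * c) v = act I c (act I b v) := by
  show ((rho I (b * c)).unop) v = _
  rw [map_mul, MulOpposite.unop_mul]
  rfl

theorem act_letter (x : X) (t : FreeMonoid X) (r : I.ringCon.Quotient) :
    act I (MonoidAlgebra.of k (FreeMonoid X) (FreeMonoid.of x)) (Finsupp.single t r) =
      Finsupp.single (pre W (t * FreeMonoid.of x)) (r * chi I (suf W (t * FreeMonoid.of x))) := by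
  have h1 : rho I (MonoidAlgebra.of k (FreeMonoid X) (FreeMonoid.of x)) =
      MulOpposite.op (stepL I x) := by
    rw [rho, MonoidAlgebra.lift_of, FreeMonoid.lift_eval_of]
  show ((rho I _).unop) _ = _
  rw [h1, MulOpposite.unop_op, stepL, Finsupp.lsum_single]
  rfl

section WithHyp

variable (hW1 : ∀ w ∈ W, w ≠ 1)
  (ha : ∀ w ∈ W, ∀ w' ∈ W, w ≠ w' → ¬ ∃ u u' : FreeMonoid X, w' = u * w * u')
  (hb : ∀ w ∈ W, ∀ w' ∈ W, ∀ a b : FreeMonoid X, w = a * b → a ≠ 1 → b ≠ 1 →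
      ¬ ∃ c : FreeMonoid X, w' = b * c)

include hW1 ha hb in
theorem act_block_aux : ∀ (l : List X) (pfx t : FreeMonoid X) (r : I.ringCon.Quotient),
    (∀ s p, t = p * s → s ∈ Mo W → s = 1) → ∀ w ∈ W, w = pfx * FreeMonoid.ofList l →
    l ≠ [] →
    act I (MonoidAlgebra.of k (FreeMonoid X) (FreeMonoid.ofList l))
        (Finsupp.single (t * pfx) r) = Finsupp.single t (r * chi I w) := by
  intro l
  induction l with
  | nil => intro _ _ _ _ _ _ _ hne; exact absurd rfl hne
  | cons x l' IH =>
    intro pfx t r hrr w hw hsplit _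
    by_cases hl' : l' = []
    · subst hl'
      have hofl : FreeMonoid.ofList [x] = FreeMonoid.of x := rfl
      rw [hofl] at hsplit ⊢
      rw [act_letter]
      have habs := ABS1 W hW1 ha hrr hw
      have heq : (t * pfx) * FreeMonoid.of x = t * w := by rw [mul_assoc, ← hsplit]
      rw [heq, habs.1, habs.2]
    · have hofl : FreeMonoid.ofList (x :: l') = FreeMonoid.of x * FreeMonoid.ofList l' :=
        FreeMonoid.ofList_cons x l'
      rw [hofl, map_mul, act_mul, act_letter]
      have hc1 : FreeMonoid.ofList l' ≠ 1 := by
        intro hcontra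
        exact hl' (by simpa using congrArg FreeMonoid.toList hcontra)
      have hsplit' : w = (pfx * FreeMonoid.of x) * FreeMonoid.ofList l' := by
        rw [hsplit, hofl, mul_assoc]
      have habs := ABS0 W hW1 ha hb hrr hw hsplit' hc1
      have heq : (t * pfx) * FreeMonoid.of x = t * (pfx * FreeMonoid.of x) := by
        rw [mul_assoc]
      rw [heq, habs.1, habs.2, chi_one, mul_one, ← heq, mul_assoc]
      have := IH (pfx * FreeMonoid.of x) t r hrr w hw hsplit' hl'
      rw [← mul_assoc] at this ⊢
      exact this

include hW1 ha hb in
theorem act_W {w : FreeMonoid X} (hw : w ∈ W) {t : FreeMonoid X}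
    (hrr : ∀ s p, t = p * s → s ∈ Mo W → s = 1) (r : I.ringCon.Quotient) :
    act I (MonoidAlgebra.of k (FreeMonoid X) w) (Finsupp.single t r) =
      Finsupp.single t (r * chi I w) := by
  have h1 : w = 1 * FreeMonoid.ofList (FreeMonoid.toList w) := by
    rw [one_mul, FreeMonoid.ofList_toList]
  have h2 : FreeMonoid.toList w ≠ [] := by
    intro hc
    exact hW1 w hw (by simpa using congrArg FreeMonoid.ofList hc)
  have := act_block_aux I hW1 ha hb (FreeMonoid.toList w) 1 t r hrr w hw h1 h2
  rw [mul_one, FreeMonoid.ofList_toList] at this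
  exact this

include hW1 ha hb in
theorem act_M {m : FreeMonoid X} (hm : m ∈ Mo W) {t : FreeMonoid X}
    (hrr : ∀ s p, t = p * s → s ∈ Mo W → s = 1) (r : I.ringCon.Quotient) :
    act I (MonoidAlgebra.of k (FreeMonoid X) m) (Finsupp.single t r) =
      Finsupp.single t (r * chi I m) := by
  induction hm using Submonoid.closure_induction generalizing r with
  | mem w hw => exact act_W I hW1 ha hb hw hrr r
  | one =>
    rw [map_one, chi_one I, mul_one, act_one]
  | mul x y hx hy ihx ihy =>
    rw [map_mul, act_mul, ihx r, ihy (r * chi I x), chi_mul I hx hy, mul_assoc]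

/-- The coefficient-sum linear map. -/
noncomputable def mu : MonoidAlgebra k (FreeMonoid X) →ₗ[k] I.ringCon.Quotient :=
  (Finsupp.lsum k fun g => LinearMap.toSpanSingleton k _ (chi I g)) ∘ₗ
    (MonoidAlgebra.coeffLinearEquiv k).toLinearMap

theorem mu_of (g : FreeMonoid X) :
    mu I (MonoidAlgebra.of k (FreeMonoid X) g) = chi I g := by
  show mu I (MonoidAlgebra.single g 1) = chi I g
  rw [mu, LinearMap.comp_apply, LinearEquiv.coe_coe, MonoidAlgebra.coeffLinearEquiv_apply,
    MonoidAlgebra.coeff_single]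
  erw [Finsupp.lsum_single]
  rw [LinearMap.toSpanSingleton_apply, one_smul]

include hW1 ha hb in
theorem act_span {t : FreeMonoid X}
    (hrr : ∀ s p, t = p * s → s ∈ Mo W → s = 1) (r : I.ringCon.Quotient)
    {b : MonoidAlgebra k (FreeMonoid X)}
    (hbmem : b ∈ Submodule.span k
      (MonoidAlgebra.of k (FreeMonoid X) '' ((Mo W : Set (FreeMonoid X))))) :
    act I b (Finsupp.single t r) = Finsupp.single t (r * mu I b) := by
  induction hbmem using Submodule.span_induction with
  | mem b hbm =>
    obtain ⟨m, hm, rfl⟩ := hbm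
    rw [mu_of, act_M I hW1 ha hb hm hrr r]
  | zero =>
    rw [map_zero, mul_zero, Finsupp.single_zero]
    show (rho I 0).unop _ = 0
    rw [map_zero]
    rfl
  | add b1 b2 _ _ ih1 ih2 =>
    rw [map_add, mul_add, Finsupp.single_add, ← ih1, ← ih2]
    show (rho I (b1 + b2)).unop _ = _
    rw [map_add]
    rfl
  | smul c b _ ih =>
    rw [map_smul, mul_smul_comm, ← Finsupp.smul_single, ← ih]
    show (rho I (c • b)).unop _ = _
    rw [map_smul]
    rfl

theorem mem_span_of_mem_A {b : MonoidAlgebra k (FreeMonoid X)} (hbA : b ∈ AA k X W) :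
    b ∈ Submodule.span k
      (MonoidAlgebra.of k (FreeMonoid X) '' ((Mo W : Set (FreeMonoid X)))) := by
  have h1 : Subalgebra.toSubmodule (AA k X W) =
      Submodule.span k ((Submonoid.closure (MonoidAlgebra.of k (FreeMonoid X) '' W) :
        Submonoid (MonoidAlgebra k (FreeMonoid X))) : Set (MonoidAlgebra k (FreeMonoid X))) :=
    Algebra.adjoin_eq_span k _
  have h2 : (Submonoid.closure (MonoidAlgebra.of k (FreeMonoid X) '' W)) =
      (Mo W).map (MonoidAlgebra.of k (FreeMonoid X)) :=
    (MonoidHom.map_mclosure _ _).symm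
  have h3 : b ∈ Subalgebra.toSubmodule (AA k X W) := hbA
  rw [h1, h2] at h3
  rw [Submonoid.coe_map] at h3
  exact h3

theorem mu_val (a : AA k X W) :
    mu I (a : MonoidAlgebra k (FreeMonoid X)) = RingCon.mk' I.ringCon a := by
  have hsub : Submodule.span k
      (MonoidAlgebra.of k (FreeMonoid X) '' ((Mo W : Set (FreeMonoid X)))) ≤
      Subalgebra.toSubmodule (AA k X W) := by
    rw [Submodule.span_le]
    rintro _ ⟨m, hm, rfl⟩
    exact of_mem_A hm
  have key : ∀ b ∈ Submodule.span k
      (MonoidAlgebra.of k (FreeMonoid X) '' ((Mo W : Set (FreeMonoid X)))),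
      ∀ h : b ∈ AA k X W, mu I b = RingCon.mk' I.ringCon ⟨b, h⟩ := by
    intro b hbmem
    induction hbmem using Submodule.span_induction with
    | mem b hbm =>
      intro h
      obtain ⟨m, hm, rfl⟩ := hbm
      rw [mu_of, chi_mem I hm]
    | zero =>
      intro h
      rw [map_zero]
      have : (⟨(0 : MonoidAlgebra k (FreeMonoid X)), h⟩ : AA k X W) = 0 := rfl
      rw [this, map_zero]
    | add b1 b2 hm1 hm2 ih1 ih2 =>
      intro h
      rw [map_add, ih1 (hsub hm1), ih2 (hsub hm2)]
      have : (⟨b1 + b2, h⟩ : AA k X W) = ⟨b1, hsub hm1⟩ + ⟨b2, hsub hm2⟩ := rfl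
      rw [this, map_add]
    | smul c b hm ih =>
      intro h
      rw [map_smul, ih (hsub hm)]
      have : (⟨c • b, h⟩ : AA k X W) = c • ⟨b, hsub hm⟩ := rfl
      rw [this]
      have h2 : RingCon.mk' I.ringCon (c • (⟨b, hsub hm⟩ : AA k X W)) =
          c • RingCon.mk' I.ringCon ⟨b, hsub hm⟩ := (RingCon.coe_smul _ _ _)
      rw [h2]
  exact key _ (mem_span_of_mem_A a.2) a.2

theorem act_zero (v : Vv I) : act I 0 v = 0 := by
  show ((rho I 0).unop) v = 0
  rw [map_zero]
  rfl

theorem act_add (b c : MonoidAlgebra k (FreeMonoid X)) (v : Vv I) :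
    act I (b + c) v = act I b v + act I c v := by
  show ((rho I (b + c)).unop) v = _
  rw [map_add]
  rfl

theorem act_neg (b : MonoidAlgebra k (FreeMonoid X)) (v : Vv I) :
    act I (-b) v = -(act I b v) := by
  show ((rho I (-b)).unop) v = _
  rw [map_neg]
  rfl

theorem act_smul (c : k) (b : MonoidAlgebra k (FreeMonoid X)) (v : Vv I) :
    act I (c • b) v = c • act I b v := by
  show ((rho I (c • b)).unop) v = _
  rw [map_smul]
  rfl

theorem act_pure : ∀ (l : List X) (t : FreeMonoid X) (r : I.ringCon.Quotient),
    (∀ s p, t = p * s → s ∈ Mo W → s = 1) →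
    ∃ t' r', act I (MonoidAlgebra.of k (FreeMonoid X) (FreeMonoid.ofList l))
        (Finsupp.single t r) = Finsupp.single t' r' ∧
      (∀ s p, t' = p * s → s ∈ Mo W → s = 1) := by
  intro l
  induction l with
  | nil =>
    intro t r hrr
    refine ⟨t, r, ?_, hrr⟩
    have : FreeMonoid.ofList ([] : List X) = 1 := rfl
    rw [this, map_one, act_one]
  | cons x l' IH =>
    intro t r hrr
    rw [FreeMonoid.ofList_cons, map_mul, act_mul, act_letter]
    exact IH (pre W (t * FreeMonoid.of x)) (r * chi I (suf W (t * FreeMonoid.of x)))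
      (RR_pre W (t * FreeMonoid.of x))

/-- Evaluation of the representation at the canonical vector. -/
noncomputable def phi (b : MonoidAlgebra k (FreeMonoid X)) : Vv I :=
  act I b (Finsupp.single 1 1)

theorem rr_one : ∀ s p : FreeMonoid X, (1 : FreeMonoid X) = p * s → s ∈ Mo W → s = 1 :=
  fun _ _ h _ => (fm_mul_eq_one h.symm).2

include hW1 ha hb in
theorem phi_A (a : AA k X W) :
    phi I (a : MonoidAlgebra k (FreeMonoid X)) =
      Finsupp.single 1 (RingCon.mk' I.ringCon a) := by
  rw [phi, act_span I hW1 ha hb (rr_one) 1 (mem_span_of_mem_A a.2), one_mul, mu_val]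

include hW1 ha hb in
theorem phi_mono {s₀ : AA k X W} (hs₀ : s₀ ∈ I) (g h' : FreeMonoid X) :
    phi I (MonoidAlgebra.of k (FreeMonoid X) g * (s₀ : MonoidAlgebra k (FreeMonoid X)) *
      MonoidAlgebra.of k (FreeMonoid X) h') = 0 := by
  rw [phi, act_mul, act_mul]
  obtain ⟨t', r', hact, hrr'⟩ := act_pure I (FreeMonoid.toList g) 1 1 (rr_one)
  rw [FreeMonoid.ofList_toList] at hact
  rw [hact, act_span I hW1 ha hb hrr' r' (mem_span_of_mem_A s₀.2), mu_val]
  have h0 : RingCon.mk' I.ringCon s₀ = 0 := by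
    have h1 : I.ringCon s₀ 0 := hs₀
    have h2 : RingCon.mk' I.ringCon s₀ = RingCon.mk' I.ringCon 0 := Quotient.sound' h1
    rw [h2, map_zero]
  rw [h0, mul_zero, Finsupp.single_zero, map_zero]

include hW1 ha hb in
theorem phi_usv {s₀ : AA k X W} (hs₀ : s₀ ∈ I) (u v : MonoidAlgebra k (FreeMonoid X)) :
    phi I (u * (s₀ : MonoidAlgebra k (FreeMonoid X)) * v) = 0 := by
  have hmono : ∀ g : FreeMonoid X, ∀ v : MonoidAlgebra k (FreeMonoid X),
      phi I (MonoidAlgebra.of k (FreeMonoid X) g *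
        (s₀ : MonoidAlgebra k (FreeMonoid X)) * v) = 0 := by
    intro g v
    induction v using MonoidAlgebra.induction_linear with
    | zero => rw [mul_zero]; exact act_zero I _
    | add f g' ihf ihg => rw [mul_add, phi, act_add, ← phi, ← phi, ihf, ihg, add_zero]
    | single h' c =>
      have hc : (MonoidAlgebra.single h' c : MonoidAlgebra k (FreeMonoid X)) =
          c • MonoidAlgebra.of k (FreeMonoid X) h' := by
        rw [MonoidAlgebra.of_apply, MonoidAlgebra.smul_single', mul_one]
      rw [hc, mul_smul_comm, phi, act_smul, ← phi, phi_mono I hW1 ha hb hs₀ g h', smul_zero]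
  induction u using MonoidAlgebra.induction_linear with
  | zero => rw [zero_mul, zero_mul]; exact act_zero I _
  | add f g' ihf ihg => rw [add_mul, add_mul, phi, act_add, ← phi, ← phi, ihf, ihg, add_zero]
  | single g c =>
    have hc : (MonoidAlgebra.single g c : MonoidAlgebra k (FreeMonoid X)) =
        c • MonoidAlgebra.of k (FreeMonoid X) g := by
      rw [MonoidAlgebra.of_apply, MonoidAlgebra.smul_single', mul_one]
    rw [hc, smul_mul_assoc, smul_mul_assoc, phi, act_smul, ← phi, hmono g v, smul_zero]

end WithHyp

end AlgebraPart

end IEP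

/-- Let `W` be a set of nonidentity words in the free monoid on `X`
such that no member of `W` is a subword of another and no nonempty proper final
subword of a member of `W` is an initial subword of a member of `W`.  Then the
`k`-subalgebra `A` of `k⟨X⟩` generated by the monomials corresponding to `W` has the
ideal extension property in `k⟨X⟩`: every two-sided ideal `I` of `A` is the
intersection of `A` with the two-sided ideal of `k⟨X⟩` generated by `I`. -/
theorem ideal_extension_property_of_words
    (k : Type*) [CommRing k] (X : Type*) (W : Set (FreeMonoid X))
    (hW1 : ∀ w ∈ W, w ≠ 1)
    (ha : ∀ w ∈ W, ∀ w' ∈ W, w ≠ w' → ¬ ∃ u u' : FreeMonoid X, w' = u * w * u')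
    (hb : ∀ w ∈ W, ∀ w' ∈ W, ∀ a b : FreeMonoid X, w = a * b → a ≠ 1 → b ≠ 1 →
      ¬ ∃ c : FreeMonoid X, w' = b * c) :
    ∀ I : TwoSidedIdeal (Algebra.adjoin k (MonoidAlgebra.of k (FreeMonoid X) '' W)),
      ∀ a : Algebra.adjoin k (MonoidAlgebra.of k (FreeMonoid X) '' W),
        a ∈ I ↔ (a : MonoidAlgebra k (FreeMonoid X)) ∈
          TwoSidedIdeal.span' (Subtype.val '' (I : Set (Algebra.adjoin k
            (MonoidAlgebra.of k (FreeMonoid X) '' W)))) := by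
  intro I a
  constructor
  · intro haI
    rw [TwoSidedIdeal.span', TwoSidedIdeal.mem_sInf]
    intro J hJ
    exact hJ ⟨a, haI, rfl⟩
  · intro hsp
    rw [TwoSidedIdeal.span', TwoSidedIdeal.mem_sInf] at hsp
    classical
    set K : TwoSidedIdeal (MonoidAlgebra k (FreeMonoid X)) :=
      TwoSidedIdeal.mk' {b | ∀ u v, IEP.phi I (u * b * v) = 0}
        (by intro u v; rw [mul_zero, zero_mul]; exact IEP.act_zero I _)
        (by intro x y hx hy u v
            rw [mul_add, add_mul, IEP.phi, IEP.act_add, ← IEP.phi, ← IEP.phi, hx, hy, add_zero])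
        (by intro x hx u v
            rw [mul_neg, neg_mul, IEP.phi, IEP.act_neg, ← IEP.phi, hx, neg_zero])
        (by intro x y hy u v
            rw [show u * (x * y) * v = (u * x) * y * v by rw [← mul_assoc]]
            exact hy (u * x) v)
        (by intro x y hx u v
            rw [show u * (x * y) * v = u * x * (y * v) by rw [mul_assoc, mul_assoc, mul_assoc]]
            exact hx u (y * v)) with hKdef
    have hSK : (Subtype.val '' (I : Set (Algebra.adjoin k
        (MonoidAlgebra.of k (FreeMonoid X) '' W)))) ⊆ K := by
      rintro _ ⟨s₀, hs₀, rfl⟩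
      rw [hKdef]
      rw [SetLike.mem_coe, TwoSidedIdeal.mem_mk']
      exact fun u v => IEP.phi_usv I hW1 ha hb hs₀ u v
    have haK : (a : MonoidAlgebra k (FreeMonoid X)) ∈ K := hsp K hSK
    rw [hKdef, TwoSidedIdeal.mem_mk'] at haK
    have h2 := haK 1 1
    rw [one_mul, mul_one, IEP.phi_A I hW1 ha hb a] at h2
    have h3 : RingCon.mk' I.ringCon a = 0 := Finsupp.single_eq_zero.1 h2
    have h4 : RingCon.mk' I.ringCon a = RingCon.mk' I.ringCon 0 := by rw [h3, map_zero]
    exact Quotient.exact' h4
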